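/- For each c ∈ ℝ, the function V_c(x) = c·exp(−1/(2x²)) for x > 0 solves the ODE V'(x)·x³ = V(x) on (0,∞). Consequently, every solution V on (0,∞) of V'(x)x³ = V(x) is bounded on (0,∞), and hence there is no class K∞ function V : [0,∞) → [0,∞) satisfying V'(x)·x³ = V(x) for all x > 0. -/

import Mathlib

open Set

private lemma inner_deriv (x : ℝ) (hx : 0 < x) :
    HasDerivAt (fun x : ℝ => -1 / (2 * x ^ 2)) (1 / x ^ 3) x := by
  have hden : HasDerivAt (fun x : ℝ => 2 * x ^ 2) (2 * (2 * x ^ 1)) x :=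
    (hasDerivAt_pow 2 x).const_mul 2
  have h := (hasDerivAt_const x (-1 : ℝ)).div hden (by positivity)
  refine h.congr_deriv ?_
  field_simp
  ring

private lemma sol_deriv (c : ℝ) (x : ℝ) (hx : 0 < x) :
    HasDerivAt (fun x : ℝ => c * Real.exp (-1 / (2 * x ^ 2)))
      ((c * Real.exp (-1 / (2 * x ^ 2))) / x ^ 3) x := by
  have h := ((inner_deriv x hx).exp).const_mul c
  refine h.congr_deriv ?_
  ring

/-- the functions `V_c(x) = c·exp(−1/(2x²))` solve `V'(x)x³ = V(x)`
on `(0,∞)`; every solution of this ODE on `(0,∞)` is bounded; hence no class K∞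
function satisfies it. -/
theorem no_Kinfty_solution_of_Vprime_x3_eq_V :
    (∀ c : ℝ, ∀ x > (0:ℝ),
      HasDerivAt (fun x : ℝ => c * Real.exp (-1 / (2 * x ^ 2)))
        ((c * Real.exp (-1 / (2 * x ^ 2))) / x ^ 3) x) ∧
    (∀ V : ℝ → ℝ, (∀ x > (0:ℝ), HasDerivAt V (V x / x ^ 3) x) →
      ∃ M : ℝ, ∀ x > (0:ℝ), |V x| ≤ M) ∧
    ¬ ∃ V : ℝ → ℝ,
      (V 0 = 0 ∧ ContinuousOn V (Ici 0) ∧ StrictMonoOn V (Ici 0) ∧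
        (∀ r ≥ (0:ℝ), 0 ≤ V r) ∧ (∀ M : ℝ, ∃ r ≥ (0:ℝ), V r > M)) ∧
      (∀ x > (0:ℝ), HasDerivAt V (V x / x ^ 3) x) := by
  have bounded : ∀ V : ℝ → ℝ, (∀ x > (0:ℝ), HasDerivAt V (V x / x ^ 3) x) →
      ∃ M : ℝ, ∀ x > (0:ℝ), |V x| ≤ M := by
    intro V hV
    set W : ℝ → ℝ := fun x => V x * Real.exp (1 / (2 * x ^ 2)) with hWdef
    have hWderiv : ∀ x ∈ Ioi (0:ℝ), HasDerivAt W 0 x := by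
      intro x hx
      have hx : (0:ℝ) < x := hx
      have hE : HasDerivAt (fun x : ℝ => Real.exp (1 / (2 * x ^ 2)))
          (Real.exp (1 / (2 * x ^ 2)) * (-(1 / x ^ 3))) x := by
        have hinner : HasDerivAt (fun x : ℝ => 1 / (2 * x ^ 2)) (-(1 / x ^ 3)) x := by
          have h := (inner_deriv x hx).neg
          refine (h.congr_deriv rfl).congr_of_eventuallyEq (Filter.Eventually.of_forall fun y => ?_)
          simp only [Pi.neg_apply]
          ring
        exact hinner.exp
      have h := (hV x hx).mul hE
      refine h.congr_deriv ?_
      have hx3 : x ^ 3 ≠ 0 := by positivity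
      field_simp
      ring
    have hconst : ∀ x ∈ Ioi (0:ℝ), W x = W 1 := by
      intro x hx
      refine (convex_Ioi (0:ℝ)).is_const_of_fderivWithin_eq_zero
        (fun y hy => ((hWderiv y hy).differentiableAt).differentiableWithinAt)
        (fun y hy => ?_) hx (by norm_num)
      rw [fderivWithin_of_isOpen isOpen_Ioi hy, (hWderiv y hy).hasFDerivAt.fderiv]
      ext
      simp
    refine ⟨|W 1|, fun x hx => ?_⟩
    have hW := hconst x hx
    have hexp : (0:ℝ) < Real.exp (1 / (2 * x ^ 2)) := Real.exp_pos _
    have hVx : V x = W 1 / Real.exp (1 / (2 * x ^ 2)) := by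
      rw [← hW, hWdef]
      field_simp
    rw [hVx, abs_div, abs_of_pos hexp]
    have h1 : (1:ℝ) ≤ Real.exp (1 / (2 * x ^ 2)) := by
      rw [Real.one_le_exp_iff]
      positivity
    calc |W 1| / Real.exp (1 / (2 * x ^ 2)) ≤ |W 1| / 1 :=
          div_le_div_of_nonneg_left (abs_nonneg _) one_pos h1 |>.trans_eq rfl
      _ = |W 1| := div_one _
  refine ⟨fun c x hx => sol_deriv c x hx, bounded, ?_⟩
  rintro ⟨V, ⟨hV0, _, _, _, hunb⟩, hode⟩
  obtain ⟨M, hM⟩ := bounded V hode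
  obtain ⟨r, hr, hVr⟩ := hunb (max M 0)
  rcases eq_or_lt_of_le hr with h | h
  · rw [← h, hV0] at hVr
    exact absurd hVr (not_lt.2 (le_max_right _ _))
  · have := hM r h
    have : V r ≤ M := (le_abs_self _).trans this
    exact absurd hVr (not_lt.2 (this.trans (le_max_left _ _)))
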